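/- Let dA, dB ≥ 1 and let ρ be any complex matrix indexed by Fin dA × Fin dB. Define the marginals ρ_A (indexed by Fin dA) by ρ_A[a, a'] = Σ_b ρ[(a,b),(a',b)] and ρ_B (indexed by Fin dB) by ρ_B[b, b'] = Σ_a ρ[(a,b),(a,b')]. Let τ_A be the transposition of Fin 3 swapping 0 and 1, and τ_B the transposition swapping 1 and 2. Then Tr[(W_{τ_A}^A ⊗ W_{τ_B}^B) · R] = Tr[ρ · (ρ_A ⊗ ρ_B)], where R is the reindexed 3-fold Kronecker power ρ^{⊗3}. (The paper's identity underlying the total-correlation quantifier: Tr[ρ_{AB}(ρ_A ⊗ ρ_B)] equals the expectation of distinct transposition operators on the two subsystems.) -/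

import Mathlib

open Matrix Kronecker

noncomputable section

/-- Permutation operator `W_π` of local index `I`: `W_π[b,a] = 1` iff `b = a ∘ π`. -/
def permOp (I : Type*) [DecidableEq I] {t : ℕ} (π : Equiv.Perm (Fin t)) :
    Matrix (Fin t → I) (Fin t → I) ℂ :=
  Matrix.of fun b a => if b = a ∘ ⇑π then 1 else 0

/-- `t`-fold Kronecker power of a matrix. -/
def kpow {I : Type*} (M : Matrix I I ℂ) (t : ℕ) :
    Matrix (Fin t → I) (Fin t → I) ℂ :=
  Matrix.of fun a b => ∏ i, M (a i) (b i)

/-- Marginal on the `A` subsystem. -/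
def margA {dA dB : ℕ} (ρ : Matrix (Fin dA × Fin dB) (Fin dA × Fin dB) ℂ) :
    Matrix (Fin dA) (Fin dA) ℂ :=
  Matrix.of fun a a' => ∑ b : Fin dB, ρ (a, b) (a', b)

/-- Marginal on the `B` subsystem. -/
def margB {dA dB : ℕ} (ρ : Matrix (Fin dA × Fin dB) (Fin dA × Fin dB) ℂ) :
    Matrix (Fin dB) (Fin dB) ℂ :=
  Matrix.of fun b b' => ∑ a : Fin dA, ρ (a, b) (a, b')

theorem stmt_14 (dA dB : ℕ) (hA : 1 ≤ dA) (hB : 1 ≤ dB)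
    (ρ : Matrix (Fin dA × Fin dB) (Fin dA × Fin dB) ℂ) :
    ((permOp (Fin dA) (Equiv.swap 0 1) ⊗ₖ permOp (Fin dB) (Equiv.swap 1 2)) *
        Matrix.reindex (Equiv.arrowProdEquivProdArrow (Fin 3) (fun _ => Fin dA) (fun _ => Fin dB))
          (Equiv.arrowProdEquivProdArrow (Fin 3) (fun _ => Fin dA) (fun _ => Fin dB))
          (kpow ρ 3)).trace =
      (ρ * (margA ρ ⊗ₖ margB ρ)).trace := by
  classical
  simp only [Matrix.trace, Matrix.diag, Matrix.mul_apply, Matrix.kroneckerMap_apply,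
    permOp, margA, margB, Matrix.reindex_apply, Matrix.submatrix_apply, kpow,
    Matrix.of_apply]
  have symm_apply : ∀ (x y : (Fin 3 → Fin dA) × (Fin 3 → Fin dB)) (i : Fin 3),
      ρ ((Equiv.arrowProdEquivProdArrow (Fin 3) (fun _ => Fin dA) (fun _ => Fin dB)).symm y i)
        ((Equiv.arrowProdEquivProdArrow (Fin 3) (fun _ => Fin dA) (fun _ => Fin dB)).symm x i)
      = ρ (y.1 i, y.2 i) (x.1 i, x.2 i) := fun _ _ _ => rfl
  simp only [symm_apply]
  have cond1 : ∀ (f f' : Fin 3 → Fin dA),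
      (f = f' ∘ ⇑(Equiv.swap 0 1)) = (f' = f ∘ ⇑(Equiv.swap 0 1)) := by
    intro f f'
    ext
    constructor <;> rintro rfl <;> funext i <;> simp [Function.comp]
  have cond2 : ∀ (g g' : Fin 3 → Fin dB),
      (g = g' ∘ ⇑(Equiv.swap 1 2)) = (g' = g ∘ ⇑(Equiv.swap 1 2)) := by
    intro g g'
    ext
    constructor <;> rintro rfl <;> funext i <;> simp [Function.comp]
  have collapse : ∀ (x : (Fin 3 → Fin dA) × (Fin 3 → Fin dB)),
      (∑ y : (Fin 3 → Fin dA) × (Fin 3 → Fin dB),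
        ((if x.1 = y.1 ∘ ⇑(Equiv.swap 0 1) then (1:ℂ) else 0) *
          if x.2 = y.2 ∘ ⇑(Equiv.swap 1 2) then 1 else 0) *
          ∏ i : Fin 3, ρ (y.1 i, y.2 i) (x.1 i, x.2 i)) =
      ρ (x.1 1, x.2 0) (x.1 0, x.2 0) * ρ (x.1 0, x.2 2) (x.1 1, x.2 1) *
        ρ (x.1 2, x.2 1) (x.1 2, x.2 2) := by
    intro x
    rw [Fintype.sum_prod_type]
    simp only [cond1, cond2, ite_mul, zero_mul, one_mul, mul_ite, mul_zero, mul_one,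
      Finset.sum_ite_eq', Finset.mem_univ, if_true]
    rw [Fin.prod_univ_three]
    simp [Function.comp, Equiv.swap_apply_left, Equiv.swap_apply_right,
      Equiv.swap_apply_of_ne_of_ne]
  simp only [collapse]
  -- RHS expansion
  have rhs : (∑ p : Fin dA × Fin dB, ∑ q : Fin dA × Fin dB,
        ρ p q * ((∑ b : Fin dB, ρ (q.1, b) (p.1, b)) * ∑ a : Fin dA, ρ (a, q.2) (a, p.2))) =
      ∑ z : (Fin dA × Fin dB) × (Fin dA × Fin dB) × Fin dB × Fin dA,
        ρ z.1 z.2.1 * (ρ (z.2.1.1, z.2.2.1) (z.1.1, z.2.2.1) *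
          ρ (z.2.2.2, z.2.1.2) (z.2.2.2, z.1.2)) := by
    simp only [Fintype.sum_prod_type, Finset.mul_sum, Finset.sum_mul]
    apply Finset.sum_congr rfl; intros
    apply Finset.sum_congr rfl; intros
    apply Finset.sum_congr rfl; intros
    apply Finset.sum_congr rfl; intros
    exact Finset.sum_comm
  rw [rhs]
  refine Fintype.sum_equiv
    ⟨fun x => ((x.1 0, x.2 2), (x.1 1, x.2 1), x.2 0, x.1 2),
     fun z => (![z.1.1, z.2.1.1, z.2.2.2], ![z.2.2.1, z.2.1.2, z.1.2]),
     ?_, ?_⟩ _ _ ?_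
  · intro x
    refine Prod.ext (funext fun i => ?_) (funext fun i => ?_) <;> fin_cases i <;> rfl
  · intro z
    rfl
  · intro x
    show _ = ρ (x.1 0, x.2 2) (x.1 1, x.2 1) * (ρ (x.1 1, x.2 0) (x.1 0, x.2 0) * ρ (x.1 2, x.2 1) (x.1 2, x.2 2))
    ring
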